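/- (Absorbing-set estimate from the proof of Lemma A.1) Let j > 0 and let m be an IVP solution with parameter j defined on all of [0, ℓ]. If y ∈ [0, ℓ] is such that m(y) ≤ −1, then m(x) ≤ −1 − 2j(x − y) for every x ∈ [y, ℓ]. -/

import Mathlib

open Real Set

/-- The force profile `g(x) = ∫_{x-1}^x 1_{y ≤ ℓ/2} dy − ∫_x^{x+1} 1_{y ≤ ℓ/2} dy`. -/
noncomputable def gfun (ℓ : ℝ) (x : ℝ) : ℝ :=
  (∫ y in (x - 1)..x, if y ≤ ℓ / 2 then (1 : ℝ) else 0) -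
  (∫ y in x..(x + 1), if y ≤ ℓ / 2 then (1 : ℝ) else 0)

/-- An IVP solution with parameter `j`: a differentiable `m` on `[0, ℓ]` with `m 0 = 0`
and `m'(x) = -2j + βλ(1 - m(x)²) g(x)` on `[0, ℓ]`. -/
def IsIVPSolution (β lam ℓ j : ℝ) (m : ℝ → ℝ) : Prop :=
  m 0 = 0 ∧ ∀ x ∈ Icc (0 : ℝ) ℓ,
    HasDerivAt m (-2 * j + β * lam * (1 - m x ^ 2) * gfun ℓ x) x

/-- A stationary solution: an IVP solution which also satisfies `m ℓ = 0`. -/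
def IsStationarySolution (β lam ℓ j : ℝ) (m : ℝ → ℝ) : Prop :=
  IsIVPSolution β lam ℓ j m ∧ m ℓ = 0

lemma ind_intervalIntegrable (ℓ a b : ℝ) :
    IntervalIntegrable (fun y => if y ≤ ℓ / 2 then (1 : ℝ) else 0) MeasureTheory.volume a b := by
  have h : (fun y => if y ≤ ℓ / 2 then (1 : ℝ) else 0)
      = (Set.Iic (ℓ / 2)).indicator (fun _ => (1 : ℝ)) := by
    ext t; simp [Set.indicator_apply]
  rw [h, intervalIntegrable_iff]
  exact (MeasureTheory.integrableOn_const
    measure_Ioc_lt_top.ne).indicator measurableSet_Iic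

lemma gfun_nonneg (ℓ x : ℝ) : 0 ≤ gfun ℓ x := by
  have h2 : (∫ y in x..(x + 1), if y ≤ ℓ / 2 then (1 : ℝ) else 0)
      = ∫ y in (x - 1)..x, (if y + 1 ≤ ℓ / 2 then (1 : ℝ) else 0) := by
    rw [intervalIntegral.integral_comp_add_right (fun y => if y ≤ ℓ / 2 then (1 : ℝ) else 0) 1]
    norm_num
  rw [gfun, h2, sub_nonneg]
  apply intervalIntegral.integral_mono_on (by linarith)
  · simpa using (ind_intervalIntegrable ℓ x (x + 1)).comp_add_right 1
  · exact ind_intervalIntegrable ℓ (x - 1) x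
  · intro t ht
    by_cases h : t + 1 ≤ ℓ / 2
    · rw [if_pos h, if_pos (by linarith)]
    · rw [if_neg h]
      split_ifs <;> norm_num

lemma gfun_le_one (ℓ x : ℝ) : gfun ℓ x ≤ 1 := by
  have h1 : (∫ y in (x - 1)..x, if y ≤ ℓ / 2 then (1 : ℝ) else 0) ≤ 1 := by
    have h0 : (∫ y in (x - 1)..x, if y ≤ ℓ / 2 then (1 : ℝ) else 0)
        ≤ ∫ _y in (x - 1)..x, (1 : ℝ) := by
      apply intervalIntegral.integral_mono_on (by linarith) (ind_intervalIntegrable ℓ (x - 1) x)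
        intervalIntegrable_const
      intro t _; split_ifs <;> norm_num
    simpa using h0
  have h2 : 0 ≤ ∫ y in x..(x + 1), if y ≤ ℓ / 2 then (1 : ℝ) else 0 := by
    apply intervalIntegral.integral_nonneg (by linarith)
    intro t _; split_ifs <;> norm_num
  rw [gfun]; linarith

/-- Absorbing-set estimate from the proof of Lemma A.1. -/
theorem ivp_absorbing (β lam ℓ : ℝ) (hβ : 0 < β) (hlam : 0 < lam) (hℓ : 2 < ℓ)
    (j : ℝ) (hj : 0 < j) (m : ℝ → ℝ) (hm : IsIVPSolution β lam ℓ j m)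
    (y : ℝ) (hy : y ∈ Icc (0 : ℝ) ℓ) (hmy : m y ≤ -1) :
    ∀ x ∈ Icc y ℓ, m x ≤ -1 - 2 * j * (x - y) := by
  intro x hx
  set K : ℝ := 2 * β * lam + 1 with hK
  have hKpos : 0 < K := by positivity
  have key : ∀ ε > 0, m x ≤ -1 + ε * Real.exp (K * (x - y)) - 2 * j * (x - y) := by
    intro ε hε
    have hf : ContinuousOn m (Icc y ℓ) := fun t ht =>
      ((hm.2 t ⟨le_trans hy.1 ht.1, ht.2⟩).continuousAt).continuousWithinAt
    have hf' : ∀ t ∈ Ico y ℓ, HasDerivWithinAt m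
        (-2 * j + β * lam * (1 - m t ^ 2) * gfun ℓ t) (Ici t) t := fun t ht =>
      (hm.2 t ⟨le_trans hy.1 ht.1, ht.2.le⟩).hasDerivWithinAt
    have hB : ∀ t : ℝ, HasDerivAt (fun s => -1 + ε * Real.exp (K * (s - y)) - 2 * j * (s - y))
        (ε * (K * Real.exp (K * (t - y))) - 2 * j) t := by
      intro t
      have h1 : HasDerivAt (fun s : ℝ => K * (s - y)) K t := by
        simpa using ((hasDerivAt_id t).sub_const y).const_mul K
      have h2 : HasDerivAt (fun s => ε * Real.exp (K * (s - y)))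
          (ε * (Real.exp (K * (t - y)) * K)) t :=
        by have := ((Real.hasDerivAt_exp (K * (t - y))).comp t h1).const_mul ε; exact this
      have h3 : HasDerivAt (fun s : ℝ => 2 * j * (s - y)) (2 * j) t := by
        simpa using ((hasDerivAt_id t).sub_const y).const_mul (2 * j)
      have := (h2.const_add (-1)).sub h3
      exact this.congr_deriv (by ring)
    have bound : ∀ t ∈ Ico y ℓ,
        m t = -1 + ε * Real.exp (K * (t - y)) - 2 * j * (t - y) →
        -2 * j + β * lam * (1 - m t ^ 2) * gfun ℓ t
          < ε * (K * Real.exp (K * (t - y))) - 2 * j := by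
      intro t ht heq
      have hE : (1 : ℝ) ≤ Real.exp (K * (t - y)) := by
        apply Real.one_le_exp
        have := ht.1
        have h0 : 0 ≤ t - y := by linarith
        exact mul_nonneg hKpos.le h0
      have hg0 := gfun_nonneg ℓ t
      have hg1 := gfun_le_one ℓ t
      have hεE : 0 < ε * Real.exp (K * (t - y)) := by positivity
      rcases le_or_gt (m t) (-1) with hc | hc
      · have h1 : 1 - m t ^ 2 ≤ 0 := by nlinarith
        have : β * lam * (1 - m t ^ 2) * gfun ℓ t ≤ 0 := by
          apply mul_nonpos_of_nonpos_of_nonneg _ hg0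
          exact mul_nonpos_of_nonneg_of_nonpos (by positivity) h1
        nlinarith
      · -- -1 < m t, and m t = -1 + εE - 2j(t-y), so 0 < 1 + m t ≤ εE
        have hup : 1 + m t ≤ ε * Real.exp (K * (t - y)) := by
          rw [heq]
          nlinarith [ht.1, hj]
        have hlow : 0 < 1 + m t := by linarith
        have hsq : 1 - m t ^ 2 ≤ 2 * (ε * Real.exp (K * (t - y))) := by nlinarith
        have hprod : β * lam * (1 - m t ^ 2) * gfun ℓ t
            ≤ β * lam * (2 * (ε * Real.exp (K * (t - y)))) := by
          rcases le_or_gt (1 - m t ^ 2) 0 with h | h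
          · have h1 : β * lam * (1 - m t ^ 2) * gfun ℓ t ≤ 0 := by
              apply mul_nonpos_of_nonpos_of_nonneg _ hg0
              exact mul_nonpos_of_nonneg_of_nonpos (by positivity) h
            have h2 : (0:ℝ) ≤ β * lam * (2 * (ε * Real.exp (K * (t - y)))) := by positivity
            linarith
          · have h1 : (1 - m t ^ 2) * gfun ℓ t ≤ 1 - m t ^ 2 :=
              mul_le_of_le_one_right h.le hg1
            have h2 : (1 - m t ^ 2) * gfun ℓ t ≤ 2 * (ε * Real.exp (K * (t - y))) :=
              le_trans h1 hsq
            calc β * lam * (1 - m t ^ 2) * gfun ℓ t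
                = β * lam * ((1 - m t ^ 2) * gfun ℓ t) := by ring
              _ ≤ β * lam * (2 * (ε * Real.exp (K * (t - y)))) :=
                  mul_le_mul_of_nonneg_left h2 (by positivity)
        have : β * lam * (2 * (ε * Real.exp (K * (t - y))))
            < ε * (K * Real.exp (K * (t - y))) := by
          rw [hK]; nlinarith
        linarith
    have ha : m y ≤ -1 + ε * Real.exp (K * (y - y)) - 2 * j * (y - y) := by
      simp only [sub_self, mul_zero, Real.exp_zero, mul_one]
      linarith
    exact image_le_of_deriv_right_lt_deriv_boundary hf hf' ha hB bound hx
  set C : ℝ := Real.exp (K * (x - y)) with hC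
  have hCpos : 0 < C := Real.exp_pos _
  by_contra hcon
  push_neg at hcon
  have h := key ((m x - (-1 - 2 * j * (x - y))) / (2 * C))
    (div_pos (by linarith) (by positivity))
  have : ((m x - (-1 - 2 * j * (x - y))) / (2 * C)) * C
      = (m x - (-1 - 2 * j * (x - y))) / 2 := by
    field_simp
  nlinarith
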